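/- In the group algebra setting of A[U(1)] = C[t, t^{-1}] with t* = t^{-1}, the quotient of the augmentation ideal ker(ε) by the right ideal I generated by the three elements t² + q²t^{-2} - (1+q²), 𝔱(t - t^{-1}), and (q²t + t^{-1} - (q²+1))𝔱, where 𝔱 = q²t + t^{-1} - (q³+q^{-1}), is one-dimensional, spanned by the class of t - 1. -/

import Mathlib

open LaurentPolynomial

noncomputable def evalAt (a : ℂˣ) : LaurentPolynomial ℂ →ₐ[ℂ] ℂ :=
  AddMonoidAlgebra.lift ℂ ℂ ℤ ((Units.coeHom ℂ).comp (zpowersHom ℂˣ a))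

@[simp] lemma evalAt_T (a : ℂˣ) (n : ℤ) : evalAt a (T n) = (a : ℂ) ^ n := by
  have : (T n : LaurentPolynomial ℂ) = AddMonoidAlgebra.single n 1 := rfl
  rw [evalAt, this, AddMonoidAlgebra.lift_single]
  simp

@[simp] lemma evalAt_C (a : ℂˣ) (c : ℂ) : evalAt a (LaurentPolynomial.C c) = c := by
  rw [LaurentPolynomial.C_eq_algebraMap]; exact (evalAt a).commutes c

/-- The counit `ε` of `A[U(1)] = ℂ[t,t⁻¹]`, sending every `tⁿ` to `1`. -/
noncomputable def U1counit : LaurentPolynomial ℂ →ₐ[ℂ] ℂ :=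
  AddMonoidAlgebra.lift ℂ ℂ ℤ (1 : Multiplicative ℤ →* ℂ)

/-- In `A[U(1)] = ℂ[t,t⁻¹]` (with `t* = t⁻¹`), the quotient of the
augmentation ideal `ker ε` by the ideal `I` generated by
`t² + q²t⁻² - (1+q²)`, `𝔱(t - t⁻¹)` and `(q²t + t⁻¹ - (q²+1))𝔱`, where
`𝔱 = q²t + t⁻¹ - (q³+q⁻¹)`, is one-dimensional, spanned by the class of
`t - 1`: the class of `t - 1` is nonzero, and every element of `ker ε` is
congruent modulo `I` to a scalar multiple of `t - 1`. -/
@[simp] lemma U1counit_T (n : ℤ) : U1counit (T n) = 1 := by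
  have : (T n : LaurentPolynomial ℂ) = AddMonoidAlgebra.single n 1 := rfl
  rw [U1counit, this, AddMonoidAlgebra.lift_single]
  simp

lemma U1counit_eq : U1counit = evalAt 1 := by
  unfold U1counit evalAt
  congr 1
  ext
  simp

section DvdAux
open Polynomial

lemma evalAt_toLaurent (a : ℂˣ) (p : ℂ[X]) :
    evalAt a (p.toLaurent) = p.eval (a : ℂ) := by
  have h : (evalAt a).comp Polynomial.toLaurentAlg = Polynomial.aeval ((a : ℂ)) := by
    apply Polynomial.algHom_ext
    simp [Polynomial.toLaurentAlg_apply, Polynomial.toLaurent_X]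
  have := congrArg (fun f => f p) (congrArg DFunLike.coe h)
  simpa [Polynomial.toLaurentAlg_apply, Polynomial.coe_aeval_eq_eval] using this

lemma dvd_of_eval (a b : ℂˣ) (hab : (a : ℂ) ≠ b) (f : LaurentPolynomial ℂ)
    (ha : evalAt a f = 0) (hb : evalAt b f = 0) :
    (T 1 - LaurentPolynomial.C ((a : ℂ))) * (T 1 - LaurentPolynomial.C ((b : ℂ))) ∣ f := by
  obtain ⟨n, p, hp⟩ := exists_T_pow f
  have hpa : p.eval ((a : ℂ)) = 0 := by
    rw [← evalAt_toLaurent, hp, map_mul, ha, zero_mul]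
  have hpb : p.eval ((b : ℂ)) = 0 := by
    rw [← evalAt_toLaurent, hp, map_mul, hb, zero_mul]
  obtain ⟨w, hw⟩ := (Polynomial.dvd_iff_isRoot.2 hpa : (X - Polynomial.C ((a:ℂ))) ∣ p)
  have hwb : w.eval ((b : ℂ)) = 0 := by
    have := hpb
    rw [hw] at this
    simp at this
    rcases this with h | h
    · exact absurd (sub_eq_zero.1 h) (fun h' => hab h'.symm)
    · exact h
  obtain ⟨v, hv⟩ := (Polynomial.dvd_iff_isRoot.2 hwb : (X - Polynomial.C ((b:ℂ))) ∣ w)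
  have hf : f = toLaurent p * T (-(n:ℤ)) := by
    rw [hp, mul_T_assoc]
    simp [T_zero]
  refine ⟨toLaurent v * T (-(n:ℤ)), ?_⟩
  rw [hf, hw, hv]
  simp only [map_mul, map_sub, Polynomial.toLaurent_X, Polynomial.toLaurent_C]
  ring

end DvdAux

namespace U1aux
variable (Q : ℂ)

local notation "CC" => LaurentPolynomial.C (R := ℂ)

lemma hxy : (T 1 : LaurentPolynomial ℂ) * T (-1) = 1 := by
  rw [← T_add]; norm_num [T_zero]

lemma hT2 : (T 2 : LaurentPolynomial ℂ) = T 1 * T 1 := by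
  rw [show (2:ℤ) = 1 + 1 by norm_num, T_add]

lemma hTm2 : (T (-2) : LaurentPolynomial ℂ) = T (-1) * T (-1) := by
  rw [show (-2:ℤ) = -1 + -1 by norm_num, T_add]

lemma eG1 : T 2 * (T 2 + CC (Q^2) * T (-2) - CC (1 + Q^2))
    = (T 1 ^ 2 - 1) * (T 1 ^ 2 - CC Q ^ 2) := by
  rw [hT2, hTm2]
  simp only [map_add, map_pow, map_one]
  linear_combination (CC Q ^ 2 * (T (-1) * T 1 + 1)) * hxy

lemma eG2 (hQ : Q ≠ 0) :
    CC Q * T 2 * ((CC (Q^2) * T 1 + T (-1) - CC (Q^3 + Q⁻¹)) * (T 1 - T (-1)))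
    = (T 1 - CC Q) * (CC Q ^ 3 * T 1 - 1) * (T 1 ^ 2 - 1) := by
  have hc : CC Q * CC Q⁻¹ = 1 := by
    rw [← map_mul, mul_inv_cancel₀ hQ, map_one]
  rw [hT2]
  simp only [map_add, map_pow]
  linear_combination (-CC Q + T 1 * CC Q * CC Q⁻¹ + T 1 * CC Q ^ 4 - T 1 * T (-1) * CC Q
      + T 1 ^ 2 * CC Q - T 1 ^ 2 * CC Q ^ 3) * hxy + (T 1 - T 1 ^ 3) * hc

lemma eG3 (hQ : Q ≠ 0) :
    CC Q * T 2 * ((CC (Q^2) * T 1 + T (-1) - CC (Q^2 + 1)) *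
      (CC (Q^2) * T 1 + T (-1) - CC (Q^3 + Q⁻¹)))
    = ((T 1 - 1) * (CC Q ^ 2 * T 1 - 1)) * ((T 1 - CC Q) * (CC Q ^ 3 * T 1 - 1)) := by
  have hc : CC Q * CC Q⁻¹ = 1 := by
    rw [← map_mul, mul_inv_cancel₀ hQ, map_one]
  rw [hT2]
  simp only [map_add, map_pow, map_one]
  linear_combination (CC Q - T 1 * CC Q - T 1 * CC Q * CC Q⁻¹ - T 1 * CC Q ^ 3
      - T 1 * CC Q ^ 4 + T 1 * T (-1) * CC Q + 2 * T 1 ^ 2 * CC Q ^ 3) * hxy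
    + (-T 1 + T 1 ^ 2 + T 1 ^ 2 * CC Q ^ 2 - T 1 ^ 3 * CC Q ^ 2) * hc

lemma bezout :
    CC ((Q^2+1)*(Q^3+1)*(Q^4+1)) * ((T 1 - 1) * (T 1 - CC Q))
    = CC (Q^4+1) * (((T 1 - 1) * (CC Q ^ 2 * T 1 - 1)) * ((T 1 - CC Q) * (CC Q ^ 3 * T 1 - 1)))
      - (CC Q ^ 5 * T 1 + CC (-(Q^2+Q^3+Q^5)))
        * (CC Q ^ 3 * ((T 1 ^ 2 - 1) * (T 1 ^ 2 - CC Q ^ 2))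
            - (T 1 - CC Q) * (CC Q ^ 3 * T 1 - 1) * (T 1 ^ 2 - 1)) := by
  simp only [map_add, map_mul, map_pow, map_one, map_neg]
  ring

end U1aux


theorem U1_calculus_one_dimensional (q : ℝ) (hq0 : 0 < q) (hq1 : q < 1) :
    let frakt : LaurentPolynomial ℂ :=
      C ((q : ℂ) ^ 2) * T 1 + T (-1) - C ((q : ℂ) ^ 3 + (q : ℂ)⁻¹)
    let I : Ideal (LaurentPolynomial ℂ) :=
      Ideal.span {T 2 + C ((q : ℂ) ^ 2) * T (-2) - C (1 + (q : ℂ) ^ 2),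
        frakt * (T 1 - T (-1)),
        (C ((q : ℂ) ^ 2) * T 1 + T (-1) - C ((q : ℂ) ^ 2 + 1)) * frakt}
    (T 1 - 1) ∉ I ∧
    (T 1 - 1) ∈ RingHom.ker U1counit.toRingHom ∧
    ∀ x ∈ RingHom.ker U1counit.toRingHom,
      ∃ c : ℂ, x - c • (T 1 - 1) ∈ I := by
  intro frakt I
  set Q : ℂ := (q : ℂ) with hQdef
  have hq0' : q ≠ 0 := hq0.ne'
  have hq1' : q ≠ 1 := hq1.ne
  have hQ0 : Q ≠ 0 := by
    simpa [hQdef] using (Complex.ofReal_ne_zero).2 hq0'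
  have hQ1 : Q ≠ 1 := by
    rw [hQdef]
    exact_mod_cast hq1'
  set uQ : ℂˣ := Units.mk0 Q hQ0 with huQ
  have huQc : (uQ : ℂ) = Q := rfl
  -- generator memberships
  have g1mem : (T 2 + C (Q^2) * T (-2) - C (1 + Q^2)) ∈ I :=
    Ideal.subset_span (by left; rfl)
  have g2mem : frakt * (T 1 - T (-1)) ∈ I :=
    Ideal.subset_span (by right; left; rfl)
  have g3mem : (C (Q^2) * T 1 + T (-1) - C (Q^2 + 1)) * frakt ∈ I :=
    Ideal.subset_span (by right; right; rfl)
  -- evaluation at Q kills I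
  have hIker : I ≤ RingHom.ker (evalAt uQ).toRingHom := by
    rw [Ideal.span_le]
    rintro x (rfl | rfl | rfl) <;>
    · show evalAt uQ _ = 0
      simp only [frakt, map_sub, map_add, map_mul, evalAt_T, evalAt_C, huQc, ← hQdef]
      simp only [show ((2:ℤ)) = ((2:ℕ):ℤ) by norm_num, zpow_neg, zpow_natCast, zpow_one]
      field_simp
      ring
  constructor
  · -- T 1 - 1 ∉ I
    intro hmem
    have : evalAt uQ (T 1 - 1) = 0 := hIker hmem
    simp only [map_sub, evalAt_T, map_one, huQc, zpow_one] at this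
    exact hQ1 (sub_eq_zero.1 this)
  constructor
  · show U1counit (T 1 - 1) = 0
    simp
  · intro x hx
    have hux : U1counit x = 0 := hx
    have g2mem' : (C (Q^2) * T 1 + T (-1) - C (Q^3 + Q⁻¹)) * (T 1 - T (-1)) ∈ I := g2mem
    have g3mem' : (C (Q^2) * T 1 + T (-1) - C (Q^2 + 1)) *
        (C (Q^2) * T 1 + T (-1) - C (Q^3 + Q⁻¹)) ∈ I := g3mem
    have u_mem : (T 1 - 1) * (T 1 - C Q) ∈ I := by
      have m1 := I.mul_mem_left (T 2) g1mem
      rw [U1aux.eG1 Q] at m1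
      have m2 := I.mul_mem_left (C Q * T 2) g2mem'
      rw [U1aux.eG2 Q hQ0] at m2
      have m3 := I.mul_mem_left (C Q * T 2) g3mem'
      rw [U1aux.eG3 Q hQ0] at m3
      have rhs_mem : C ((Q^2+1)*(Q^3+1)*(Q^4+1)) * ((T 1 - 1) * (T 1 - C Q)) ∈ I := by
        rw [U1aux.bezout Q]
        exact Ideal.sub_mem _ (I.mul_mem_left _ m3)
          (I.mul_mem_left _ (Ideal.sub_mem _ (I.mul_mem_left _ m1) m2))
      have hc0 : ((Q^2+1)*(Q^3+1)*(Q^4+1)) ≠ 0 := by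
        have h2 : Q^2 + 1 ≠ 0 := by
          intro h
          rw [hQdef] at h
          have h' : (q^2 + 1 : ℝ) = 0 := by exact_mod_cast h
          nlinarith [pow_pos hq0 2]
        have h3 : Q^3 + 1 ≠ 0 := by
          intro h
          rw [hQdef] at h
          have h' : (q^3 + 1 : ℝ) = 0 := by exact_mod_cast h
          nlinarith [pow_pos hq0 3]
        have h4 : Q^4 + 1 ≠ 0 := by
          intro h
          rw [hQdef] at h
          have h' : (q^4 + 1 : ℝ) = 0 := by exact_mod_cast h
          nlinarith [pow_pos hq0 4]
        exact mul_ne_zero (mul_ne_zero h2 h3) h4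
      have := I.mul_mem_left (C ((Q^2+1)*(Q^3+1)*(Q^4+1))⁻¹) rhs_mem
      rwa [← mul_assoc, ← map_mul, inv_mul_cancel₀ hc0, map_one, one_mul] at this
    refine ⟨evalAt uQ x / (Q - 1), ?_⟩
    set cc : ℂ := evalAt uQ x / (Q - 1) with hcc
    have hQm1 : Q - 1 ≠ 0 := sub_ne_zero.2 hQ1
    have h1 : evalAt 1 (x - cc • (T 1 - 1)) = 0 := by
      rw [map_sub, map_smul, ← U1counit_eq]
      simp [hux]
    have hq2 : evalAt uQ (x - cc • (T 1 - 1)) = 0 := by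
      rw [map_sub, map_smul]
      simp only [map_sub, evalAt_T, map_one, huQc, zpow_one, smul_eq_mul]
      rw [hcc]
      field_simp
      ring
    have hdvd := dvd_of_eval 1 uQ (by rw [huQc]; simpa using hQ1.symm)
      _ h1 hq2
    obtain ⟨w, hw⟩ := hdvd
    have hsimp : (T 1 - LaurentPolynomial.C (((1:ℂˣ)):ℂ)) * (T 1 - LaurentPolynomial.C ((uQ:ℂ)))
        = (T 1 - 1) * (T 1 - C Q) := by
      norm_num [huQc]
    rw [hw, hsimp]
    exact I.mul_mem_right w u_mem
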